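/- If Y is a compact Hausdorff I-favorable topological space, then the hyperspace exp(Y) of nonempty closed subsets of Y with the Vietoris topology is I-favorable. -/

import Mathlib

/-- A topological space is I-favorable if Player I has a winning strategy in the open-open
game: a function `σ` assigning to each finite sequence of nonempty open sets a nonempty open
set, such that whenever the nonempty open sets `V n` satisfy `V n ⊆ σ (V 0, …, V (n-1))` for
all `n`, the union `⋃ n, V n` is dense. -/
def IFavorable (X : Type*) [TopologicalSpace X] : Prop :=
  ∃ σ : List {U : Set X // IsOpen U ∧ U.Nonempty} → {U : Set X // IsOpen U ∧ U.Nonempty},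
    ∀ V : ℕ → {U : Set X // IsOpen U ∧ U.Nonempty},
      (∀ n, (V n : Set X) ⊆ (σ (List.ofFn fun i : Fin n => V i) : Set X)) →
      Dense (⋃ n, (V n : Set X))

/-- The hyperspace `exp Y` of nonempty closed subsets of `Y`. -/
def HyperSpace (Y : Type*) [TopologicalSpace Y] : Type _ :=
  {F : Set Y // IsClosed F ∧ F.Nonempty}

/-- The Vietoris topology on the hyperspace of nonempty closed subsets, generated by the
sets `{F : F ⊆ U}` and `{F : F ∩ U ≠ ∅}` for `U` open. -/
def vietorisTopology (Y : Type*) [TopologicalSpace Y] : TopologicalSpace (HyperSpace Y) :=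
  TopologicalSpace.generateFrom
    ({S | ∃ U : Set Y, IsOpen U ∧ S = {F : HyperSpace Y | F.1 ⊆ U}} ∪
     {S | ∃ U : Set Y, IsOpen U ∧ S = {F : HyperSpace Y | (F.1 ∩ U).Nonempty}})

set_option linter.unusedSectionVars false

namespace KP

open Topology TopologicalSpace

variable {Y : Type*} [TopologicalSpace Y]

abbrev Mv (Y : Type*) [TopologicalSpace Y] := {U : Set Y // IsOpen U ∧ U.Nonempty}

def sU (L : List (Set Y)) : Set Y := ⋃₀ {U | U ∈ L}

lemma mem_sU {L : List (Set Y)} {x : Y} : x ∈ sU L ↔ ∃ U ∈ L, x ∈ U := by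
  simp [sU, Set.mem_sUnion]

lemma subset_sU {L : List (Set Y)} {U : Set Y} (h : U ∈ L) : U ⊆ sU L :=
  fun x hx => mem_sU.mpr ⟨U, h, hx⟩

lemma isOpen_sU {L : List (Set Y)} (h : ∀ U ∈ L, IsOpen U) : IsOpen (sU L) :=
  isOpen_sUnion h

def Bb (L : List (Set Y)) : Set (HyperSpace Y) :=
  {F | F.1 ⊆ sU L ∧ ∀ U ∈ L, (F.1 ∩ U).Nonempty}

lemma isOpen_sub1 {U : Set Y} (hU : IsOpen U) :
    IsOpen[vietorisTopology Y] {F : HyperSpace Y | F.1 ⊆ U} :=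
  TopologicalSpace.GenerateOpen.basic _ (Or.inl ⟨U, hU, rfl⟩)

lemma isOpen_sub2 {U : Set Y} (hU : IsOpen U) :
    IsOpen[vietorisTopology Y] {F : HyperSpace Y | (F.1 ∩ U).Nonempty} :=
  TopologicalSpace.GenerateOpen.basic _ (Or.inr ⟨U, hU, rfl⟩)

lemma isOpen_meets : ∀ (L : List (Set Y)), (∀ U ∈ L, IsOpen U) →
    IsOpen[vietorisTopology Y] {F : HyperSpace Y | ∀ U ∈ L, (F.1 ∩ U).Nonempty}
  | [], _ => by
      have h0 : {F : HyperSpace Y | ∀ U ∈ ([] : List (Set Y)), (F.1 ∩ U).Nonempty} = Set.univ := by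
        ext F; simp
      rw [h0]; exact @isOpen_univ _ (vietorisTopology Y)
  | (a :: l), h => by
      have : {F : HyperSpace Y | ∀ U ∈ (a :: l), (F.1 ∩ U).Nonempty} =
          {F : HyperSpace Y | (F.1 ∩ a).Nonempty} ∩
            {F : HyperSpace Y | ∀ U ∈ l, (F.1 ∩ U).Nonempty} := by
        ext F; simp [Set.mem_inter_iff]
      rw [this]
      exact @IsOpen.inter _ (vietorisTopology Y) _ _ (isOpen_sub2 (h a (by simp)))
        (isOpen_meets l (fun U hU => h U (by simp [hU])))

lemma isOpen_bb {L : List (Set Y)} (h : ∀ U ∈ L, IsOpen U) :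
    IsOpen[vietorisTopology Y] (Bb L) := by
  have : Bb L = {F : HyperSpace Y | F.1 ⊆ sU L} ∩
      {F : HyperSpace Y | ∀ U ∈ L, (F.1 ∩ U).Nonempty} := rfl
  rw [this]
  exact @IsOpen.inter _ (vietorisTopology Y) _ _ (isOpen_sub1 (isOpen_sU h)) (isOpen_meets L h)

lemma bb_meet [T1Space Y] {L M : List (Set Y)} (hL : L ≠ [])
    (h1 : ∀ U ∈ L, (U ∩ sU M).Nonempty) (h2 : ∀ W ∈ M, (W ∩ sU L).Nonempty) :
    (Bb L ∩ Bb M).Nonempty := by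
  classical
  obtain ⟨U₀, hU₀⟩ := List.exists_mem_of_ne_nil L hL
  obtain ⟨y₀, _⟩ := h1 U₀ hU₀
  set f : Set Y → Y := fun U => if h : (U ∩ sU M).Nonempty then h.choose else y₀ with hf
  set g : Set Y → Y := fun W => if h : (W ∩ sU L).Nonempty then h.choose else y₀ with hg
  have hfmem : ∀ U ∈ L, f U ∈ U ∩ sU M := by
    intro U hU
    have h' := h1 U hU
    simp only [hf, dif_pos h']
    exact h'.choose_spec
  have hgmem : ∀ W ∈ M, g W ∈ W ∩ sU L := by
    intro W hW
    have h' := h2 W hW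
    simp only [hg, dif_pos h']
    exact h'.choose_spec
  set S : Set Y := (f '' {U | U ∈ L}) ∪ (g '' {W | W ∈ M}) with hS
  have hfin : S.Finite := ((L.finite_toSet).image f).union ((M.finite_toSet).image g)
  have hSne : S.Nonempty := ⟨f U₀, Or.inl ⟨U₀, hU₀, rfl⟩⟩
  refine ⟨⟨S, hfin.isClosed, hSne⟩, ⟨?_, ?_⟩, ?_, ?_⟩
  · rintro x (⟨U, hU, rfl⟩ | ⟨W, hW, rfl⟩)
    · exact subset_sU hU (hfmem U hU).1
    · exact (hgmem W hW).2
  · intro U hU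
    exact ⟨f U, Or.inl ⟨U, hU, rfl⟩, (hfmem U hU).1⟩
  · rintro x (⟨U, hU, rfl⟩ | ⟨W, hW, rfl⟩)
    · exact (hfmem U hU).2
    · exact subset_sU hW (hgmem W hW).1
  · intro W hW
    exact ⟨g W, Or.inr ⟨W, hW, rfl⟩, (hgmem W hW).1⟩

lemma bb_nonempty [T1Space Y] {L : List (Set Y)} (hL : L ≠ [])
    (h : ∀ U ∈ L, U.Nonempty) : (Bb L).Nonempty := by
  obtain ⟨F, hF, _⟩ := bb_meet hL
    (fun U hU => (h U hU).imp fun x hx => ⟨hx, subset_sU hU hx⟩)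
    (fun U hU => (h U hU).imp fun x hx => ⟨hx, subset_sU hU hx⟩)
  exact ⟨F, hF⟩

lemma exists_bb_aux :
    ∀ {O : Set (HyperSpace Y)},
      TopologicalSpace.GenerateOpen
        ({S | ∃ U : Set Y, IsOpen U ∧ S = {F : HyperSpace Y | F.1 ⊆ U}} ∪
         {S | ∃ U : Set Y, IsOpen U ∧ S = {F : HyperSpace Y | (F.1 ∩ U).Nonempty}}) O →
      ∀ F ∈ O, ∃ L : List (Set Y),
        (∀ U ∈ L, IsOpen U ∧ U.Nonempty) ∧ L ≠ [] ∧ F ∈ Bb L ∧ Bb L ⊆ O := by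
  intro O hO
  induction hO with
  | basic s hs =>
      intro F hF
      rcases hs with ⟨U, hU, rfl⟩ | ⟨U, hU, rfl⟩
      · -- s = {F | F.1 ⊆ U}
        refine ⟨[U], ?_, by simp, ⟨?_, ?_⟩, ?_⟩
        · intro V hV; rw [List.mem_singleton] at hV; subst hV
          exact ⟨hU, F.2.2.mono hF⟩
        · intro x hx; exact mem_sU.mpr ⟨U, by simp, hF hx⟩
        · intro V hV; rw [List.mem_singleton] at hV; subst hV
          exact F.2.2.imp fun x hx => ⟨hx, hF hx⟩
        · intro G hG
          intro x hx
          rcases mem_sU.mp (hG.1 hx) with ⟨V, hV, hxV⟩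
          rw [List.mem_singleton] at hV; subst hV; exact hxV
      · -- s = {F | (F.1 ∩ U).Nonempty}
        obtain ⟨y, hyF, hyU⟩ := hF
        refine ⟨[Set.univ, U], ?_, by simp, ⟨?_, ?_⟩, ?_⟩
        · intro V hV
          rcases List.mem_pair.mp hV with rfl | rfl
          · exact ⟨isOpen_univ, ⟨y, trivial⟩⟩
          · exact ⟨hU, ⟨y, hyU⟩⟩
        · intro x hx; exact mem_sU.mpr ⟨Set.univ, by simp, trivial⟩
        · intro V hV
          rcases List.mem_pair.mp hV with rfl | rfl
          · exact F.2.2.imp fun x hx => ⟨hx, trivial⟩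
          · exact ⟨y, hyF, hyU⟩
        · intro G hG
          exact hG.2 U (by simp)
  | univ =>
      intro F _
      refine ⟨[Set.univ], ?_, by simp, ⟨?_, ?_⟩, fun G _ => trivial⟩
      · intro V hV; rw [List.mem_singleton] at hV; subst hV
        exact ⟨isOpen_univ, ⟨F.2.2.choose, trivial⟩⟩
      · intro x hx; exact mem_sU.mpr ⟨Set.univ, by simp, trivial⟩
      · intro V hV; rw [List.mem_singleton] at hV; subst hV
        exact F.2.2.imp fun x hx => ⟨hx, trivial⟩
  | inter s t _ _ ihs iht =>
      intro F hF
      obtain ⟨L₁, hL₁p, hL₁ne, ⟨hF1s, hF1m⟩, hL₁sub⟩ := ihs F hF.1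
      obtain ⟨L₂, hL₂p, hL₂ne, ⟨hF2s, hF2m⟩, hL₂sub⟩ := iht F hF.2
      refine ⟨L₁.map (· ∩ sU L₂) ++ L₂.map (· ∩ sU L₁), ?_, ?_, ⟨?_, ?_⟩, ?_⟩
      · intro V hV
        rcases List.mem_append.mp hV with hV | hV <;>
          obtain ⟨U, hU, rfl⟩ := List.mem_map.mp hV
        · refine ⟨(hL₁p U hU).1.inter (isOpen_sU fun W hW => (hL₂p W hW).1), ?_⟩
          obtain ⟨x, hx⟩ := hF1m U hU
          exact ⟨x, hx.2, hF2s hx.1⟩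
        · refine ⟨(hL₂p U hU).1.inter (isOpen_sU fun W hW => (hL₁p W hW).1), ?_⟩
          obtain ⟨x, hx⟩ := hF2m U hU
          exact ⟨x, hx.2, hF1s hx.1⟩
      · simp only [ne_eq, List.append_eq_nil_iff, List.map_eq_nil_iff, not_and]
        intro h; exact absurd h hL₁ne
      · intro x hx
        rcases mem_sU.mp (hF1s hx) with ⟨U, hU, hxU⟩
        exact mem_sU.mpr ⟨U ∩ sU L₂, List.mem_append.mpr (Or.inl (List.mem_map.mpr ⟨U, hU, rfl⟩)),
          hxU, hF2s hx⟩
      · intro V hV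
        rcases List.mem_append.mp hV with hV | hV <;>
          obtain ⟨U, hU, rfl⟩ := List.mem_map.mp hV
        · obtain ⟨x, hx⟩ := hF1m U hU
          exact ⟨x, hx.1, hx.2, hF2s hx.1⟩
        · obtain ⟨x, hx⟩ := hF2m U hU
          exact ⟨x, hx.1, hx.2, hF1s hx.1⟩
      · intro G hG
        constructor
        · apply hL₁sub
          constructor
          · intro x hx
            rcases mem_sU.mp (hG.1 hx) with ⟨V, hV, hxV⟩
            rcases List.mem_append.mp hV with hV | hV <;>
              obtain ⟨U, hU, rfl⟩ := List.mem_map.mp hV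
            · exact mem_sU.mpr ⟨U, hU, hxV.1⟩
            · exact mem_sU.mpr (mem_sU.mp hxV.2)
          · intro U hU
            obtain ⟨x, hx⟩ := hG.2 (U ∩ sU L₂)
              (List.mem_append.mpr (Or.inl (List.mem_map.mpr ⟨U, hU, rfl⟩)))
            exact ⟨x, hx.1, hx.2.1⟩
        · apply hL₂sub
          constructor
          · intro x hx
            rcases mem_sU.mp (hG.1 hx) with ⟨V, hV, hxV⟩
            rcases List.mem_append.mp hV with hV | hV <;>
              obtain ⟨U, hU, rfl⟩ := List.mem_map.mp hV
            · exact mem_sU.mpr (mem_sU.mp hxV.2)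
            · exact mem_sU.mpr ⟨U, hU, hxV.1⟩
          · intro U hU
            obtain ⟨x, hx⟩ := hG.2 (U ∩ sU L₁)
              (List.mem_append.mpr (Or.inr (List.mem_map.mpr ⟨U, hU, rfl⟩)))
            exact ⟨x, hx.1, hx.2.1⟩
  | sUnion S _ ih =>
      intro F hF
      obtain ⟨s, hs, hFs⟩ := hF
      obtain ⟨L, h1, h2, h3, h4⟩ := ih s hs F hFs
      exact ⟨L, h1, h2, h3, fun G hG => ⟨s, hs, h4 hG⟩⟩

lemma exists_bb {O : Set (HyperSpace Y)} (hO : IsOpen[vietorisTopology Y] O)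
    {F : HyperSpace Y} (hF : F ∈ O) :
    ∃ L : List (Set Y),
      (∀ U ∈ L, IsOpen U ∧ U.Nonempty) ∧ L ≠ [] ∧ F ∈ Bb L ∧ Bb L ⊆ O :=
  exists_bb_aux hO F hF

lemma extraction [T1Space Y] {G : List (Set Y)} (hGo : ∀ U ∈ G, IsOpen U)
    {W : Set (HyperSpace Y)} (hWo : IsOpen[vietorisTopology Y] W) (hWne : W.Nonempty)
    (hWG : W ⊆ Bb G) :
    ∃ E : List (ℕ × Set Y),
      (∀ p ∈ E, p.1 < G.length ∧ IsOpen p.2 ∧ p.2.Nonempty ∧ p.2 ⊆ G.getD p.1 ∅) ∧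
      (∀ j, j < G.length → ∃ p ∈ E, p.1 = j) ∧
      Bb (E.map (·.2)) ⊆ W := by
  classical
  obtain ⟨F, hF⟩ := hWne
  obtain ⟨D, hDp, hDne, hFD, hDW⟩ := exists_bb hWo hF
  have hFG : F ∈ Bb G := hWG hF
  refine ⟨(List.range G.length).flatMap (fun j =>
      (D.filter (fun A => decide ((F.1 ∩ G.getD j ∅ ∩ A).Nonempty))).map
        fun A => (j, (G.getD j ∅) ∩ A)), ?_, ?_, ?_⟩
  · intro p hp
    obtain ⟨j, hj, hp⟩ := List.mem_flatMap.mp hp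
    obtain ⟨A, hA, rfl⟩ := List.mem_map.mp hp
    rw [List.mem_filter, decide_eq_true_iff] at hA
    have hjlt : j < G.length := List.mem_range.mp hj
    have hGj : G.getD j ∅ ∈ G := by
      rw [List.getD_eq_getElem _ _ hjlt]; exact List.getElem_mem _
    refine ⟨hjlt, (hGo _ hGj).inter (hDp A hA.1).1, ?_, Set.inter_subset_left⟩
    obtain ⟨x, hx⟩ := hA.2
    exact ⟨x, hx.1.2, hx.2⟩
  · intro j hj
    obtain ⟨x, hxF, hxGj⟩ : (F.1 ∩ G.getD j ∅).Nonempty := by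
      have hGj : G.getD j ∅ ∈ G := by
        rw [List.getD_eq_getElem _ _ hj]; exact List.getElem_mem _
      exact hFG.2 _ hGj
    obtain ⟨A, hA, hxA⟩ := mem_sU.mp (hFD.1 hxF)
    refine ⟨(j, G.getD j ∅ ∩ A), List.mem_flatMap.mpr ⟨j, List.mem_range.mpr hj,
      List.mem_map.mpr ⟨A, ?_, rfl⟩⟩, rfl⟩
    rw [List.mem_filter, decide_eq_true_iff]
    exact ⟨hA, ⟨x, ⟨hxF, hxGj⟩, hxA⟩⟩
  · intro G' hG'
    apply hDW
    constructor
    · intro x hx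
      rcases mem_sU.mp (hG'.1 hx) with ⟨V, hV, hxV⟩
      obtain ⟨p, hp, rfl⟩ := List.mem_map.mp hV
      obtain ⟨j, _, hp⟩ := List.mem_flatMap.mp hp
      obtain ⟨A, hA, rfl⟩ := List.mem_map.mp hp
      rw [List.mem_filter] at hA
      exact mem_sU.mpr ⟨A, hA.1, hxV.2⟩
    · intro A hA
      obtain ⟨x, hxF, hxA⟩ := hFD.2 A hA
      obtain ⟨j, hj, hxGj⟩ : ∃ j, j < G.length ∧ x ∈ G.getD j ∅ := by
        rcases mem_sU.mp (hFG.1 hxF) with ⟨U, hU, hxU⟩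
        obtain ⟨j, hj, rfl⟩ := List.mem_iff_getElem.mp hU
        exact ⟨j, hj, by rw [List.getD_eq_getElem _ _ hj]; exact hxU⟩
      have hmem : (j, G.getD j ∅ ∩ A) ∈ (List.range G.length).flatMap (fun j =>
          (D.filter (fun A => decide ((F.1 ∩ G.getD j ∅ ∩ A).Nonempty))).map
            fun A => (j, (G.getD j ∅) ∩ A)) := by
        refine List.mem_flatMap.mpr ⟨j, List.mem_range.mpr hj, List.mem_map.mpr ⟨A, ?_, rfl⟩⟩
        rw [List.mem_filter, decide_eq_true_iff]
        exact ⟨hA, ⟨x, ⟨hxF, hxGj⟩, hxA⟩⟩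
      obtain ⟨y, hy⟩ := hG'.2 _ (List.mem_map.mpr ⟨_, hmem, rfl⟩)
      exact ⟨y, hy.1, hy.2.2⟩

lemma dichotomy [T1Space Y] {L : List (Set Y)} (hL : L ≠ [])
    {E : List (ℕ × Set Y)}
    (hEb : ∀ p ∈ E, p.1 < L.length ∧ p.2.Nonempty)
    (hEs : ∀ j, j < L.length → ∃ p ∈ E, p.1 = j)
    (hdisj : Bb (E.map (·.2)) ∩ Bb L = ∅) :
    ∃ p ∈ E, p.2 ∩ L.getD p.1 ∅ = ∅ := by
  by_contra hc
  push_neg at hc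
  have hEne : E.map (·.2) ≠ [] := by
    have : 0 < L.length := List.length_pos_of_ne_nil hL
    obtain ⟨p, hp, _⟩ := hEs 0 this
    simp only [ne_eq, List.map_eq_nil_iff]
    rintro rfl; exact absurd hp List.not_mem_nil
  have key := bb_meet (L := E.map (·.2)) (M := L) hEne ?_ ?_
  · rw [hdisj] at key; exact Set.not_nonempty_empty key
  · intro U hU
    obtain ⟨p, hp, rfl⟩ := List.mem_map.mp hU
    obtain ⟨x, hx⟩ := hc p hp
    have hLp : L.getD p.1 ∅ ∈ L := by
      rw [List.getD_eq_getElem _ _ (hEb p hp).1]; exact List.getElem_mem _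
    exact ⟨x, hx.1, subset_sU hLp hx.2⟩
  · intro V hV
    obtain ⟨j, hj, rfl⟩ := List.mem_iff_getElem.mp hV
    obtain ⟨p, hp, hpj⟩ := hEs j hj
    obtain ⟨x, hx⟩ := hc p hp
    refine ⟨x, ?_, subset_sU (List.mem_map.mpr ⟨p, hp, rfl⟩) hx.1⟩
    rw [hpj, List.getD_eq_getElem _ _ hj] at hx
    exact hx.2

section Machine

abbrev MvH (Y : Type*) [TopologicalSpace Y] :=
  {U : Set (HyperSpace Y) // IsOpen[vietorisTopology Y] U ∧ U.Nonempty}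

variable [T1Space Y] (σ : List (Mv Y) → Mv Y)

def Legal (ℓ : List (Mv Y)) : Prop :=
  ∀ k, (hk : k < ℓ.length) → (ℓ[k] : Set Y) ⊆ (σ (ℓ.take k) : Set Y)

lemma legal_append {ℓ : List (Mv Y)} (hl : Legal σ ℓ) {m : Mv Y}
    (hm : (m : Set Y) ⊆ (σ ℓ : Set Y)) : Legal σ (ℓ ++ [m]) := by
  intro k hk
  rw [List.length_append, List.length_singleton] at hk
  rcases Nat.lt_or_ge k ℓ.length with hlt | hge
  · rw [List.getElem_append_left hlt, List.take_append_of_le_length (Nat.le_of_lt hlt)]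
    exact hl k hlt
  · have hk' : k = ℓ.length := Nat.le_antisymm (Nat.lt_succ_iff.mp hk) hge
    subst hk'
    rw [List.getElem_append_right (Nat.le_refl _)]
    simpa [List.take_left] using hm

abbrev Leg := {ℓ : List (Mv Y) // Legal σ ℓ}

def root : Leg σ := ⟨[], fun k hk => absurd hk (by simp)⟩

abbrev St := List (Leg σ) × ℕ

def decode (n : ℕ) : List ℕ := (Denumerable.ofNat (ℕ × List ℕ) n).2

lemma decode_hits (l : List ℕ) (N : ℕ) : ∃ n, N ≤ n ∧ decode n = l := by
  by_contra hcon
  push_neg at hcon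
  have hlt : ∀ k : ℕ, Encodable.encode ((k, l) : ℕ × List ℕ) < N := by
    intro k
    have hd : decode (Encodable.encode ((k, l) : ℕ × List ℕ)) = l := by
      unfold decode; rw [Denumerable.ofNat_encode]
    by_contra hge
    exact absurd hd (hcon _ (Nat.le_of_not_lt hge))
  have hinj : Function.Injective (fun k : ℕ => (⟨Encodable.encode ((k, l) : ℕ × List ℕ), hlt k⟩ : Fin N)) := by
    intro a b hab
    have : Encodable.encode ((a, l) : ℕ × List ℕ) = Encodable.encode ((b, l) : ℕ × List ℕ) :=
      congrArg Fin.val hab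
    have := Encodable.encode_injective this
    exact (Prod.mk.injEq _ _ _ _ ▸ this).1
  obtain ⟨a, b, hne, h⟩ := Finite.exists_ne_map_eq_of_infinite
    (fun k : ℕ => (⟨Encodable.encode ((k, l) : ℕ × List ℕ), hlt k⟩ : Fin N))
  exact hne (hinj h)

def idxs (n : ℕ) : List ℕ := if decode n = [] then [0] else decode n

lemma idxs_ne_nil (n : ℕ) : idxs n ≠ [] := by
  unfold idxs; split
  · simp
  · assumption

def slots (s : St σ) : List (Leg σ) := (idxs s.2).map fun i => s.1.getD i (root σ)

lemma slots_ne_nil (s : St σ) : slots σ s ≠ [] := by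
  unfold slots
  simp only [ne_eq, List.map_eq_nil_iff]
  exact idxs_ne_nil s.2

def GsSets (s : St σ) : List (Set Y) := (slots σ s).map fun ℓ => ((σ ℓ.1 : Mv Y) : Set Y)

lemma gsSets_props (s : St σ) : ∀ U ∈ GsSets σ s, IsOpen U ∧ U.Nonempty := by
  intro U hU
  obtain ⟨ℓ, _, rfl⟩ := List.mem_map.mp hU
  exact (σ ℓ.1).2

lemma gsSets_ne_nil (s : St σ) : GsSets σ s ≠ [] := by
  unfold GsSets
  simp only [ne_eq, List.map_eq_nil_iff]
  exact slots_ne_nil σ s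

def move (s : St σ) : MvH Y :=
  ⟨Bb (GsSets σ s), isOpen_bb (fun U hU => (gsSets_props σ s U hU).1),
    bb_nonempty (gsSets_ne_nil σ s) (fun U hU => (gsSets_props σ s U hU).2)⟩

noncomputable def extractE (s : St σ) (W : MvH Y) : List (ℕ × Set Y) := by
  classical
  exact if h : W.1 ⊆ Bb (GsSets σ s) then
    (extraction (fun U hU => (gsSets_props σ s U hU).1) W.2.1 W.2.2 h).choose
  else []

lemma extractE_props (s : St σ) (W : MvH Y) :
    ∀ p ∈ extractE σ s W, p.1 < (GsSets σ s).length ∧ IsOpen p.2 ∧ p.2.Nonempty ∧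
      p.2 ⊆ (GsSets σ s).getD p.1 ∅ := by
  classical
  unfold extractE
  split
  · next h =>
      exact (extraction (fun U hU => (gsSets_props σ s U hU).1) W.2.1 W.2.2 h).choose_spec.1
  · intro p hp; exact absurd hp List.not_mem_nil

lemma extractE_surj (s : St σ) (W : MvH Y) (h : W.1 ⊆ Bb (GsSets σ s)) :
    ∀ j, j < (GsSets σ s).length → ∃ p ∈ extractE σ s W, p.1 = j := by
  classical
  unfold extractE
  rw [dif_pos h]
  exact (extraction (fun U hU => (gsSets_props σ s U hU).1) W.2.1 W.2.2 h).choose_spec.2.1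

lemma extractE_sub (s : St σ) (W : MvH Y) (h : W.1 ⊆ Bb (GsSets σ s)) :
    Bb ((extractE σ s W).map (·.2)) ⊆ W.1 := by
  classical
  unfold extractE
  rw [dif_pos h]
  exact (extraction (fun U hU => (gsSets_props σ s U hU).1) W.2.1 W.2.2 h).choose_spec.2.2

def child (s : St σ) (p : ℕ × Set Y)
    (hp : p.1 < (GsSets σ s).length ∧ IsOpen p.2 ∧ p.2.Nonempty ∧
      p.2 ⊆ (GsSets σ s).getD p.1 ∅) : Leg σ := by
  refine ⟨((slots σ s).getD p.1 (root σ)).1 ++ [⟨p.2, hp.2.1, hp.2.2.1⟩], ?_⟩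
  have hlt : p.1 < (slots σ s).length := by
    have := hp.1; rwa [GsSets, List.length_map] at this
  apply legal_append σ ((slots σ s).getD p.1 (root σ)).2
  have hG : (GsSets σ s).getD p.1 ∅ = ((σ ((slots σ s).getD p.1 (root σ)).1 : Mv Y) : Set Y) := by
    rw [List.getD_eq_getElem _ _ hp.1]
    simp only [GsSets, List.getElem_map]
    rw [List.getD_eq_getElem _ _ hlt]
  rw [hG] at hp
  exact hp.2.2.2

noncomputable def upd (s : St σ) (W : MvH Y) : St σ :=
  (s.1 ++ (extractE σ s W).attach.map (fun q => child σ s q.1 (extractE_props σ s W q.1 q.2)),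
    s.2 + 1)

variable (Wseq : ℕ → MvH Y)

noncomputable def states : ℕ → St σ := fun n =>
  Nat.rec ([root σ], 0) (fun n s => upd σ s (Wseq n)) n

lemma states_zero : states σ Wseq 0 = ([root σ], 0) := rfl

lemma states_succ (n : ℕ) : states σ Wseq (n+1) = upd σ (states σ Wseq n) (Wseq n) := rfl

lemma states_snd (n : ℕ) : (states σ Wseq n).2 = n := by
  induction n with
  | zero => rfl
  | succ n ih => rw [states_succ]; simpa [upd] using ih

lemma states_eq_foldl (n : ℕ) :
    states σ Wseq n = (List.ofFn fun i : Fin n => Wseq i).foldl (upd σ) ([root σ], 0) := by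
  induction n with
  | zero => rfl
  | succ n ih =>
      rw [List.ofFn_succ', List.concat_eq_append, List.foldl_concat]
      rw [states_succ, ih]
      rfl

lemma states_prefix {m n : ℕ} (h : m ≤ n) :
    (states σ Wseq m).1 <+: (states σ Wseq n).1 := by
  induction n with
  | zero => rw [Nat.le_zero.mp h]
  | succ n ih =>
      rcases Nat.lt_or_ge m (n+1) with hlt | hge
      · refine (ih (Nat.lt_succ_iff.mp hlt)).trans ?_
        rw [states_succ]
        exact List.prefix_append _ _
      · rw [Nat.le_antisymm h hge]

lemma getD_stable {m n : ℕ} (h : m ≤ n) {i : ℕ} (hi : i < (states σ Wseq m).1.length) :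
    (states σ Wseq n).1.getD i (root σ) = (states σ Wseq m).1.getD i (root σ) := by
  have hpre := states_prefix σ Wseq h
  have hi' : i < (states σ Wseq n).1.length := Nat.lt_of_lt_of_le hi hpre.length_le
  rw [List.getD_eq_getElem _ _ hi, List.getD_eq_getElem _ _ hi']
  exact (hpre.getElem hi).symm

lemma states_len_mono {m n : ℕ} (h : m ≤ n) :
    (states σ Wseq m).1.length ≤ (states σ Wseq n).1.length :=
  (states_prefix σ Wseq h).length_le

lemma states_len_pos (n : ℕ) : 0 < (states σ Wseq n).1.length :=
  Nat.lt_of_lt_of_le (by rw [states_zero]; simp) (states_len_mono σ Wseq (Nat.zero_le n))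

end Machine

section Step

variable [T1Space Y] (σ : List (Mv Y) → Mv Y) (Wseq : ℕ → MvH Y)

noncomputable def nodeAt (t i : ℕ) : Leg σ := (states σ Wseq t).1.getD i (root σ)

lemma step (hWlegal : ∀ n, (Wseq n).1 ⊆ (move σ (states σ Wseq n)).1)
    {L : List (Set Y)} (hL : L ≠ [])
    (hbad : ∀ n, (Wseq n).1 ∩ Bb L = ∅)
    (t : ℕ) (idx : Fin L.length → ℕ)
    (hb : ∀ j, idx j < (states σ Wseq t).1.length) :
    ∃ (t' : ℕ) (idx' : Fin L.length → ℕ) (j₀ : Fin L.length) (m : Mv Y),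
      (∀ j, idx' j < (states σ Wseq t').1.length) ∧
      (∀ j, j ≠ j₀ → (nodeAt σ Wseq t' (idx' j)).1 = (nodeAt σ Wseq t (idx j)).1) ∧
      (nodeAt σ Wseq t' (idx' j₀)).1 = (nodeAt σ Wseq t (idx j₀)).1 ++ [m] ∧
      (m : Set Y) ∩ L.getD (j₀ : ℕ) ∅ = ∅ := by
  classical
  have hq : 0 < L.length := List.length_pos_of_ne_nil hL
  obtain ⟨N, hNt, hdec⟩ := decode_hits (List.ofFn fun j => (idx j : ℕ)) t
  set s := states σ Wseq N with hs
  have hsnd : s.2 = N := states_snd σ Wseq N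
  have hofne : (List.ofFn fun j => (idx j : ℕ)) ≠ [] := by
    have : (List.ofFn fun j => (idx j : ℕ)).length = L.length := List.length_ofFn
    intro hcon; rw [hcon] at this; simp at this; omega
  have hidxs : idxs s.2 = List.ofFn fun j => (idx j : ℕ) := by
    rw [hsnd]; unfold idxs; rw [hdec, if_neg hofne]
  have hslotslen : (slots σ s).length = L.length := by
    rw [slots, List.length_map, hidxs, List.length_ofFn]
  have hglen : (GsSets σ s).length = L.length := by
    rw [GsSets, List.length_map, hslotslen]
  -- identify slots with tracked nodes
  have hslot : ∀ (i : ℕ) (hi : i < L.length),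
      (slots σ s).getD i (root σ) = nodeAt σ Wseq t (idx ⟨i, hi⟩) := by
    intro i hi
    have hi' : i < (slots σ s).length := by rw [hslotslen]; exact hi
    rw [List.getD_eq_getElem _ _ hi']
    simp only [slots, List.getElem_map]
    have : (idxs s.2)[i]'(by rw [hidxs, List.length_ofFn]; exact hi) = idx ⟨i, hi⟩ := by
      simp only [hidxs]
      rw [List.getElem_ofFn]
    rw [this]
    unfold nodeAt
    rw [hs]
    exact getD_stable σ Wseq hNt (hb ⟨i, hi⟩)
  have hWsub : (Wseq N).1 ⊆ Bb (GsSets σ s) := hWlegal N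
  set E := extractE σ s (Wseq N) with hE
  have hprops := extractE_props σ s (Wseq N)
  have hsurj := extractE_surj σ s (Wseq N) hWsub
  have hsub := extractE_sub σ s (Wseq N) hWsub
  have hdisj : Bb (E.map (·.2)) ∩ Bb L = ∅ := by
    apply Set.eq_empty_of_subset_empty
    intro x hx
    rw [← hbad N]
    exact ⟨hsub hx.1, hx.2⟩
  obtain ⟨p, hpE, hpdisj⟩ := dichotomy hL
    (fun p hp => ⟨by rw [← hglen]; exact (hprops p hp).1, (hprops p hp).2.2.1⟩)
    (fun j hj => hsurj j (by rw [hglen]; exact hj)) hdisj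
  obtain ⟨k, hk, hEk⟩ := List.mem_iff_getElem.mp hpE
  have hp1 : p.1 < L.length := by rw [← hglen]; exact (hprops p hpE).1
  refine ⟨N + 1, fun j => if j = ⟨p.1, hp1⟩ then s.1.length + k else idx j,
    ⟨p.1, hp1⟩, ⟨p.2, (hprops p hpE).2.1, (hprops p hpE).2.2.1⟩, ?_, ?_, ?_, ?_⟩
  all_goals
    have hst' : (states σ Wseq (N+1)).1 =
        s.1 ++ E.attach.map (fun q => child σ s q.1 (extractE_props σ s (Wseq N) q.1 q.2)) := by
      rw [states_succ]; rfl
  · intro j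
    dsimp only
    by_cases hj : j = ⟨p.1, hp1⟩
    · rw [if_pos hj, hst', List.length_append, List.length_map, List.length_attach]
      exact Nat.add_lt_add_left hk _
    · rw [if_neg hj]
      exact Nat.lt_of_lt_of_le (hb j)
        (states_len_mono σ Wseq (Nat.le_succ_of_le hNt))
  · intro j hj
    dsimp only
    rw [if_neg hj]
    unfold nodeAt
    rw [getD_stable σ Wseq (Nat.le_succ_of_le hNt) (hb j)]
  · dsimp only
    rw [if_pos rfl]
    unfold nodeAt
    have hklt : s.1.length + k < (states σ Wseq (N+1)).1.length := by
      rw [hst', List.length_append, List.length_map, List.length_attach]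
      exact Nat.add_lt_add_left hk _
    rw [List.getD_eq_getElem _ _ hklt]
    have hgetE : (states σ Wseq (N+1)).1[s.1.length + k]'hklt =
        child σ s (E.attach[k]'(by rwa [List.length_attach])).1
          (extractE_props σ s (Wseq N) _ (E.attach[k]'(by rwa [List.length_attach])).2) := by
      simp only [hst']
      rw [List.getElem_append_right (Nat.le_add_right _ _)]
      simp only [Nat.add_sub_cancel_left]
      rw [List.getElem_map]
    rw [hgetE]
    have hattach : (E.attach[k]'(by rwa [List.length_attach])).1 = p := by
      rw [List.getElem_attach]; exact hEk
    unfold child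
    simp only
    congr 1
    · rw [hattach]
      exact congrArg Subtype.val (hslot p.1 hp1)
    · congr 1
      apply Subtype.ext
      simp only
      exact congrArg Prod.snd hattach
  · exact hpdisj

end Step

lemma infinite_exists_ge {s : Set ℕ} (hs : s.Infinite) (N : ℕ) : ∃ k ∈ s, N ≤ k := by
  by_contra hcon
  push_neg at hcon
  exact hs (Set.Finite.subset (Set.finite_Iio N) (fun k hk => hcon k hk))

lemma winning [T1Space Y] (σ : List (Mv Y) → Mv Y)
    (hσ : ∀ V : ℕ → Mv Y,
      (∀ n, (V n : Set Y) ⊆ (σ (List.ofFn fun i : Fin n => V i) : Set Y)) →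
      Dense (⋃ n, (V n : Set Y)))
    (Wseq : ℕ → MvH Y)
    (hWlegal : ∀ n, (Wseq n).1 ⊆ (move σ (states σ Wseq n)).1) :
    @Dense (HyperSpace Y) (vietorisTopology Y) (⋃ n, (Wseq n).1) := by
  classical
  by_contra hnd
  rw [@dense_iff_inter_open (HyperSpace Y) (vietorisTopology Y)] at hnd
  push_neg at hnd
  obtain ⟨O, hOo, hOne, hOdisj⟩ := hnd
  obtain ⟨F, hF⟩ := hOne
  obtain ⟨L, hLp, hLne, _, hLO⟩ := exists_bb hOo hF
  have hbad : ∀ n, (Wseq n).1 ∩ Bb L = ∅ := by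
    intro n
    apply Set.eq_empty_of_subset_empty
    intro x hx
    rw [← hOdisj]
    exact ⟨hLO hx.2, Set.mem_iUnion.mpr ⟨n, hx.1⟩⟩
  -- configurations
  let P := {c : ℕ × (Fin L.length → ℕ) //
    (∀ j, c.2 j < (states σ Wseq c.1).1.length) ∧
    ∀ j : Fin L.length, ∀ m ∈ (nodeAt σ Wseq c.1 (c.2 j)).1,
      (m : Set Y) ∩ L.getD (j : ℕ) ∅ = ∅}
  have hstep : ∀ c : P, ∃ (c' : P) (j₀ : Fin L.length),
      (∀ j, j ≠ j₀ →
        (nodeAt σ Wseq c'.1.1 (c'.1.2 j)).1 = (nodeAt σ Wseq c.1.1 (c.1.2 j)).1) ∧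
      ∃ m : Mv Y,
        (nodeAt σ Wseq c'.1.1 (c'.1.2 j₀)).1 = (nodeAt σ Wseq c.1.1 (c.1.2 j₀)).1 ++ [m] := by
    rintro ⟨⟨t, idx⟩, hb, hinv⟩
    obtain ⟨t', idx', j₀, m, hb', hoth, hgrow, hmiss⟩ :=
      step σ Wseq hWlegal hLne hbad t idx hb
    refine ⟨⟨⟨t', idx'⟩, hb', ?_⟩, j₀, fun j hj => hoth j hj, m, hgrow⟩
    intro j m' hm'
    by_cases hj : j = j₀
    · subst hj
      rw [hgrow] at hm'
      rcases List.mem_append.mp hm' with hm' | hm'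
      · exact hinv j m' hm'
      · rw [List.mem_singleton] at hm'; subst hm'; exact hmiss
    · rw [hoth j hj] at hm'
      exact hinv j m' hm'
  choose nxt hnxt using hstep
  choose j₀f hoth hgrow using hnxt
  have hc0 : ((0, fun _ => 0) : ℕ × (Fin L.length → ℕ)) ∈ {c : ℕ × (Fin L.length → ℕ) |
      (∀ j, c.2 j < (states σ Wseq c.1).1.length) ∧
      ∀ j : Fin L.length, ∀ m ∈ (nodeAt σ Wseq c.1 (c.2 j)).1,
        (m : Set Y) ∩ L.getD (j : ℕ) ∅ = ∅} := by
    constructor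
    · intro j; rw [states_zero]; simp
    · intro j m hm
      have : (nodeAt σ Wseq 0 0) = root σ := by
        unfold nodeAt; rw [states_zero]; rfl
      rw [this] at hm
      exact absurd hm List.not_mem_nil
  let c0 : P := ⟨(0, fun _ => 0), hc0⟩
  let chain : ℕ → P := fun k => nxt^[k] c0
  have chain_succ : ∀ k, chain (k + 1) = nxt (chain k) := by
    intro k
    exact Function.iterate_succ_apply' nxt k c0
  -- pigeonhole
  obtain ⟨jstar, hjstar⟩ := Finite.exists_infinite_fiber (fun k => j₀f (chain k))
  have hfib : ((fun k => j₀f (chain k)) ⁻¹' {jstar}).Infinite :=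
    Set.infinite_coe_iff.mp hjstar
  let pl : ℕ → List (Mv Y) := fun k => (nodeAt σ Wseq (chain k).1.1 ((chain k).1.2 jstar)).1
  have hpl_step : ∀ k, pl k <+: pl (k + 1) := by
    intro k
    show pl k <+: (nodeAt σ Wseq (chain (k+1)).1.1 ((chain (k+1)).1.2 jstar)).1
    rw [chain_succ]
    by_cases hj : j₀f (chain k) = jstar
    · obtain ⟨m, hm⟩ := hgrow (chain k)
      rw [hj] at hm
      rw [hm]
      exact ⟨[m], rfl⟩
    · rw [hoth (chain k) jstar (fun hc => hj hc.symm)]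
  have hpl_mono : ∀ {k k'}, k ≤ k' → pl k <+: pl k' := by
    intro k k' h
    induction k' with
    | zero => rw [Nat.le_zero.mp h]
    | succ k' ih =>
        rcases Nat.lt_or_ge k (k'+1) with hlt | hge
        · exact (ih (Nat.lt_succ_iff.mp hlt)).trans (hpl_step k')
        · rw [Nat.le_antisymm h hge]
  have hpl_grow : ∀ k ∈ (fun k => j₀f (chain k)) ⁻¹' {jstar},
      (pl (k+1)).length = (pl k).length + 1 := by
    intro k hk
    have hj : j₀f (chain k) = jstar := hk
    obtain ⟨m, hm⟩ := hgrow (chain k)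
    show ((nodeAt σ Wseq (chain (k+1)).1.1 ((chain (k+1)).1.2 jstar)).1).length = _
    rw [chain_succ, ← hj, hm, List.length_append, List.length_singleton, hj]
  have hunb : ∀ i, ∃ k, i < (pl k).length := by
    intro i
    induction i with
    | zero =>
        obtain ⟨k, hk, _⟩ := infinite_exists_ge hfib 0
        exact ⟨k + 1, by rw [hpl_grow k hk]; omega⟩
    | succ i ih =>
        obtain ⟨k, hk⟩ := ih
        obtain ⟨k', hk', hkk'⟩ := infinite_exists_ge hfib k
        have h1 : (pl k).length ≤ (pl k').length := (hpl_mono hkk').length_le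
        exact ⟨k' + 1, by rw [hpl_grow k' hk']; omega⟩
  choose K hK using hunb
  let Vp : ℕ → Mv Y := fun i => (pl (K i))[i]'(hK i)
  have hcoh : ∀ k i, (hik : i < (pl k).length) → (pl k)[i] = Vp i := by
    intro k i hik
    rcases Nat.le_total k (K i) with h | h
    · exact (hpl_mono h).getElem hik
    · exact ((hpl_mono h).getElem (hK i)).symm
  have hlegal : ∀ n, (Vp n : Set Y) ⊆ (σ (List.ofFn fun i : Fin n => Vp i) : Set Y) := by
    intro n
    have hleg := (nodeAt σ Wseq (chain (K n)).1.1 ((chain (K n)).1.2 jstar)).2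
    have htake : (pl (K n)).take n = List.ofFn fun i : Fin n => Vp i := by
      apply List.ext_getElem
      · have := hK n
        rw [List.length_take, List.length_ofFn]
        omega
      · intro i h1 h2
        rw [List.getElem_take, List.getElem_ofFn]
        exact hcoh (K n) i (Nat.lt_trans (by rw [List.length_ofFn] at h2; exact h2) (hK n))
    have := hleg n (hK n)
    rw [htake] at this
    exact this
  have hmiss : ∀ i, (Vp i : Set Y) ∩ L.getD (jstar : ℕ) ∅ = ∅ := by
    intro i
    exact (chain (K i)).2.2 jstar _ (List.getElem_mem _)
  have hdense := hσ Vp hlegal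
  have hLmem : L.getD (jstar : ℕ) ∅ ∈ L := by
    rw [List.getD_eq_getElem _ _ jstar.2]
    exact List.getElem_mem _
  obtain ⟨x, hx1, hx2⟩ := dense_iff_inter_open.mp hdense (L.getD (jstar : ℕ) ∅)
    (hLp _ hLmem).1 (hLp _ hLmem).2
  obtain ⟨i, hxi⟩ := Set.mem_iUnion.mp hx2
  have : x ∈ (Vp i : Set Y) ∩ L.getD (jstar : ℕ) ∅ := ⟨hxi, hx1⟩
  rw [hmiss i] at this
  exact this

end KP


/-- Kucharski–Plewik: if a compact Hausdorff space `Y` is I-favorable, then the hyperspace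
`exp Y` with the Vietoris topology is I-favorable. -/
theorem iFavorable_hyperspace_of_iFavorable (Y : Type*) [TopologicalSpace Y]
    [CompactSpace Y] [T2Space Y] (h : IFavorable Y) :
    @IFavorable (HyperSpace Y) (vietorisTopology Y) := by
  obtain ⟨σ, hσ⟩ := h
  refine ⟨fun l => KP.move σ (l.foldl (KP.upd σ) ([KP.root σ], 0)), ?_⟩
  intro W hW
  have hWlegal : ∀ n, (W n).1 ⊆ (KP.move σ (KP.states σ W n)).1 := by
    intro n
    have h2 := hW n
    rw [KP.states_eq_foldl σ W n]
    exact h2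
  exact KP.winning σ hσ W hWlegal
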